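/- arXiv:2508.04831 — 3 statements merged into one kernel-verified Lean document; each statement's English description precedes it below -/
import Mathlib

section
/- Let R be an integral domain and f ∈ R nonzero non-invertible. An element of S = R[u,v]/(uv - f) of the form b_l v^l + ... + b_1 v + b_0 with b_i ∈ R is divisible by u in S if and only if every b_i is divisible by f in R. -/
open MvPolynomial

/-- The suspension ring `S = R[u,v]/(uv - f)`. -/
abbrev Susp (R : Type*) [CommRing R] (f : R) : Type _ :=
  MvPolynomial (Fin 2) R ⧸
    Ideal.span {(X 0 * X 1 - C f : MvPolynomial (Fin 2) R)}

/-- The image of the variable `u` in `S`. -/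
noncomputable abbrev suspU (R : Type*) [CommRing R] (f : R) : Susp R f :=
  Ideal.Quotient.mk _ (X 0)

/-- The image of the variable `v` in `S`. -/
noncomputable abbrev suspV (R : Type*) [CommRing R] (f : R) : Susp R f :=
  Ideal.Quotient.mk _ (X 1)

open LaurentPolynomial in
noncomputable def suspAux (R : Type*) [CommRing R] (f : R) :
    MvPolynomial (Fin 2) R →ₐ[R] LaurentPolynomial R :=
  MvPolynomial.aeval ![LaurentPolynomial.C f * T (-1), T 1]

open LaurentPolynomial in
theorem suspAux_gen (R : Type*) [CommRing R] (f : R) :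
    suspAux R f ((X 0 * X 1 - MvPolynomial.C f : MvPolynomial (Fin 2) R)) = 0 := by
  rw [map_sub, map_mul, suspAux, aeval_X, aeval_X, aeval_C]
  show LaurentPolynomial.C f * T (-1) * T 1 - algebraMap R (LaurentPolynomial R) f = 0
  rw [mul_assoc, ← T_add, neg_add_cancel, T_zero, mul_one, LaurentPolynomial.C_eq_algebraMap, sub_self]

noncomputable def suspToLaurent (R : Type*) [CommRing R] (f : R) :
    Susp R f →+* LaurentPolynomial R :=
  Ideal.Quotient.lift _ (suspAux R f).toRingHom (by
    intro p hp
    rw [Ideal.mem_span_singleton] at hp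
    obtain ⟨q, rfl⟩ := hp
    simp [map_mul, suspAux_gen])

theorem suspToLaurent_mk (R : Type*) [CommRing R] (f : R) (p : MvPolynomial (Fin 2) R) :
    suspToLaurent R f (Ideal.Quotient.mk _ p) = suspAux R f p := rfl

open LaurentPolynomial in
/-- An element `b_l v^l + … + b_1 v + b_0` of `S = R[u,v]/(uv - f)`, with `b_i ∈ R`,
is divisible by `u` if and only if every `b_i` is divisible by `f` in `R`. -/
theorem suspU_dvd_iff (R : Type*) [CommRing R] [IsDomain R] (f : R)
    (hf0 : f ≠ 0) (hf : ¬ IsUnit f) (l : ℕ) (b : ℕ → R) :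
    suspU R f ∣ (∑ i ∈ Finset.range (l + 1),
        algebraMap R (Susp R f) (b i) * (suspV R f) ^ i) ↔
      ∀ i ∈ Finset.range (l + 1), f ∣ b i := by
  have halg : ∀ r : R, algebraMap R (Susp R f) r
      = Ideal.Quotient.mk _ (MvPolynomial.C r) := fun r => rfl
  have huv : suspU R f * suspV R f = algebraMap R (Susp R f) f := by
    rw [halg]
    rw [← sub_eq_zero, ← map_mul, ← map_sub, Ideal.Quotient.eq_zero_iff_mem]
    exact Ideal.subset_span rfl
  constructor
  · rintro ⟨w, hw⟩ i hi
    obtain ⟨q, rfl⟩ := Ideal.Quotient.mk_surjective w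
    have h2 := congrArg (suspToLaurent R f) hw
    rw [map_mul, map_sum] at h2
    have hU : suspToLaurent R f (suspU R f) = LaurentPolynomial.C f * T (-1) := by
      rw [suspToLaurent_mk, suspAux, aeval_X]; rfl
    have hV : suspToLaurent R f (suspV R f) = T 1 := by
      rw [suspToLaurent_mk, suspAux, aeval_X]; rfl
    have hsum : ∀ j, suspToLaurent R f
        (algebraMap R (Susp R f) (b j) * suspV R f ^ j)
        = AddMonoidAlgebra.single (j : ℤ) (b j) := by
      intro j
      rw [map_mul, map_pow, hV, halg, suspToLaurent_mk, suspAux, aeval_C,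
        ← LaurentPolynomial.C_eq_algebraMap, T_pow, mul_one, ← single_eq_C_mul_T]
    simp only [hsum, hU] at h2
    set W : LaurentPolynomial R :=
      LaurentPolynomial.C f * T (-1) * suspToLaurent R f (Ideal.Quotient.mk _ q) with hW
    have h3 : (∑ x ∈ Finset.range (l + 1), AddMonoidAlgebra.single (x : ℤ) (b x)).coeff (i : ℤ)
        = W.coeff (i : ℤ) := by rw [h2]
    rw [AddMonoidAlgebra.coeff_sum, Finset.sum_apply'] at h3
    simp only [AddMonoidAlgebra.coeff_single] at h3
    rw [Finset.sum_eq_single i (fun j _ hj => Finsupp.single_eq_of_ne' (by exact_mod_cast hj))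
      (fun h => absurd hi h), Finsupp.single_eq_same] at h3
    have hC : (LaurentPolynomial.C f : LaurentPolynomial R) = AddMonoidAlgebra.single 0 f := by
      rw [single_eq_C_mul_T, T_zero, mul_one]
    rw [hW, mul_assoc, hC, AddMonoidAlgebra.coeff_single_zero_mul] at h3
    exact ⟨_, h3⟩
  · intro h
    set c : ℕ → R := fun i => if hi : i ∈ Finset.range (l + 1) then (h i hi).choose else 0
      with hc
    refine ⟨∑ i ∈ Finset.range (l + 1),
      algebraMap R (Susp R f) (c i) * suspV R f ^ (i + 1), ?_⟩
    rw [Finset.mul_sum]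
    refine Finset.sum_congr rfl fun i hi => ?_
    have hb : b i = f * c i := by
      rw [hc]; simp only [hi, dif_pos]; exact (h i hi).choose_spec
    rw [hb, map_mul, ← huv, pow_succ]
    ring
end

section
/- Let R be a UFD and f ∈ R a nonzero non-unit prime element, S = R[u,v]/(uv - f). If g ∈ S is irreducible and not divisible by u, and l is the smallest non-negative integer such that u^l g lies in the subring R[u] of S, then u^l g is a prime element of R[u]. -/
open MvPolynomial

namespace SuspAux

noncomputable section

set_option synthInstance.maxHeartbeats 400000

variable {R : Type*} [CommRing R] (f : R)

local notation "𝕀" => Ideal.span {(X 0 * X 1 - C f : MvPolynomial (Fin 2) R)}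

lemma sRel : suspU R f * suspV R f = algebraMap R (Susp R f) f := by
  have h : (Ideal.Quotient.mk 𝕀) (X 0 * X 1 - C f) = 0 :=
    Ideal.Quotient.eq_zero_iff_mem.mpr (Ideal.subset_span rfl)
  have h2 : (Ideal.Quotient.mk 𝕀) (X 0 * X 1) = (Ideal.Quotient.mk 𝕀) (C f) := by
    rwa [map_sub, sub_eq_zero] at h
  calc suspU R f * suspV R f = (Ideal.Quotient.mk 𝕀) (X 0 * X 1) := (map_mul _ _ _).symm
    _ = (Ideal.Quotient.mk 𝕀) (C f) := h2
    _ = algebraMap R (Susp R f) f := rfl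

/-- The map to Laurent polynomials sending `u ↦ T`, `v ↦ f T⁻¹`. -/
def Psi : MvPolynomial (Fin 2) R →ₐ[R] LaurentPolynomial R :=
  MvPolynomial.aeval
    ![LaurentPolynomial.T 1, LaurentPolynomial.C f * LaurentPolynomial.T (-1)]

lemma Psi_rel : Psi f ((X 0 * X 1 - C f : MvPolynomial (Fin 2) R)) = 0 := by
  simp only [Psi, map_sub, map_mul, MvPolynomial.aeval_X, MvPolynomial.aeval_C,
    Matrix.cons_val_zero, Matrix.cons_val_one, Matrix.head_cons]
  rw [show (algebraMap R (LaurentPolynomial R)) f = LaurentPolynomial.C f from rfl]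
  rw [← mul_assoc, mul_comm (LaurentPolynomial.T 1) (LaurentPolynomial.C f), mul_assoc,
    ← LaurentPolynomial.T_add]
  norm_num [LaurentPolynomial.T_zero, sub_self]

def psi : Susp R f →ₐ[R] LaurentPolynomial R :=
  Ideal.Quotient.liftₐ 𝕀 (Psi f) (by
    intro a ha
    rw [Ideal.mem_span_singleton] at ha
    obtain ⟨c, rfl⟩ := ha
    rw [map_mul, Psi_rel, zero_mul])

lemma psi_mk (P : MvPolynomial (Fin 2) R) :
    psi f (Ideal.Quotient.mk 𝕀 P) = Psi f P := rfl

lemma psi_u : psi f (suspU R f) = LaurentPolynomial.T 1 := by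
  rw [show suspU R f = Ideal.Quotient.mk 𝕀 (X 0) from rfl, psi_mk, Psi,
    MvPolynomial.aeval_X]
  rfl

lemma psi_v : psi f (suspV R f) =
    LaurentPolynomial.C f * LaurentPolynomial.T (-1) := by
  rw [show suspV R f = Ideal.Quotient.mk 𝕀 (X 1) from rfl, psi_mk, Psi,
    MvPolynomial.aeval_X]
  rfl

lemma aeval_T_one :
    (Polynomial.aeval (LaurentPolynomial.T 1) : Polynomial R →ₐ[R] LaurentPolynomial R)
      = Polynomial.toLaurentAlg := by
  apply Polynomial.algHom_ext
  rw [Polynomial.aeval_X]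
  show _ = Polynomial.toLaurent Polynomial.X
  rw [Polynomial.toLaurent_X]

lemma psi_aeval_u (a : Polynomial R) :
    psi f (Polynomial.aeval (suspU R f) a) = Polynomial.toLaurent a := by
  rw [← Polynomial.aeval_algHom_apply, psi_u]
  rw [show Polynomial.aeval (LaurentPolynomial.T 1) a
      = (Polynomial.aeval (LaurentPolynomial.T 1) :
          Polynomial R →ₐ[R] LaurentPolynomial R) a from rfl, aeval_T_one]
  rfl

lemma psi_aeval_v (b : Polynomial R) :
    psi f (Polynomial.aeval (suspV R f) b)
      = Polynomial.aeval (LaurentPolynomial.C f * LaurentPolynomial.T (-1)) b := by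
  rw [← Polynomial.aeval_algHom_apply, psi_v]

lemma aevalV_single (n : ℕ) (a : R) :
    (Polynomial.aeval (LaurentPolynomial.C f * LaurentPolynomial.T (-1))
        (Polynomial.monomial n a) : LaurentPolynomial R)
      = AddMonoidAlgebra.single (-(n:ℤ)) (a * f ^ n) := by
  rw [Polynomial.aeval_monomial, mul_pow, LaurentPolynomial.T_pow, ← map_pow]
  rw [show (algebraMap R (LaurentPolynomial R)) a = LaurentPolynomial.C a from rfl]
  rw [← mul_assoc, ← map_mul, LaurentPolynomial.single_eq_C_mul_T]
  norm_num

lemma aevalV_coeff_neg (b : Polynomial R) (n : ℕ) :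
    (Polynomial.aeval (LaurentPolynomial.C f * LaurentPolynomial.T (-1)) b :
      LaurentPolynomial R).coeff (-(n:ℤ)) = f ^ n * b.coeff n := by
  induction b using Polynomial.induction_on' with
  | add p q hp hq =>
    rw [map_add, AddMonoidAlgebra.coeff_add, Finsupp.add_apply, hp, hq, Polynomial.coeff_add, mul_add]
  | monomial m a =>
    rw [aevalV_single, AddMonoidAlgebra.coeff_single, Finsupp.single_apply, Polynomial.coeff_monomial]
    by_cases h : m = n
    · subst h; simp [mul_comm]
    · rw [if_neg (by omega), if_neg h, mul_zero]

lemma aevalV_coeff_pos (b : Polynomial R) (k : ℤ) (hk : 0 < k) :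
    (Polynomial.aeval (LaurentPolynomial.C f * LaurentPolynomial.T (-1)) b :
      LaurentPolynomial R).coeff k = 0 := by
  induction b using Polynomial.induction_on' with
  | add p q hp hq => rw [map_add, AddMonoidAlgebra.coeff_add, Finsupp.add_apply, hp, hq, add_zero]
  | monomial m a =>
    rw [aevalV_single, AddMonoidAlgebra.coeff_single, Finsupp.single_apply, if_neg (by omega)]

lemma toLaurent_coeff (a : Polynomial R) (n : ℕ) :
    (Polynomial.toLaurent a).coeff (n : ℤ) = a.coeff n := by
  rw [LaurentPolynomial.coeff_toLaurent]
  exact Finsupp.mapDomain_apply Nat.castEmbedding.injective _ n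

lemma toLaurent_coeff_neg (a : Polynomial R) (k : ℤ) (hk : k < 0) :
    (Polynomial.toLaurent a).coeff k = 0 := by
  rw [LaurentPolynomial.coeff_toLaurent]
  refine Finsupp.mapDomain_notin_range _ _ ?_
  rintro ⟨m, rfl⟩; simp at hk; omega

/-- Normal form: every element of `S` is `a(u) + b(v)` with `b(0) = 0`. -/
lemma normal_form (s : Susp R f) :
    ∃ a b : Polynomial R, b.coeff 0 = 0 ∧
      s = Polynomial.aeval (suspU R f) a + Polynomial.aeval (suspV R f) b := by
  obtain ⟨P, rfl⟩ := Ideal.Quotient.mk_surjective s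
  induction P using MvPolynomial.induction_on with
  | C r =>
    refine ⟨Polynomial.C r, 0, by simp, ?_⟩
    rw [map_zero, add_zero, Polynomial.aeval_C]
    rfl
  | add p q hp hq =>
    obtain ⟨a1, b1, h1, e1⟩ := hp
    obtain ⟨a2, b2, h2, e2⟩ := hq
    exact ⟨a1 + a2, b1 + b2, by simp [h1, h2],
      by rw [map_add, e1, e2, map_add, map_add]; ring⟩
  | mul_X p i hp =>
    obtain ⟨a, b, hb0, e⟩ := hp
    have key : ∀ w : Polynomial R,
        suspU R f * Polynomial.aeval (suspV R f) (Polynomial.X * w)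
          = Polynomial.aeval (suspV R f) (Polynomial.C f * w) := by
      intro w
      rw [map_mul, map_mul, Polynomial.aeval_X, Polynomial.aeval_C, ← mul_assoc, sRel]
    have hmul : (Ideal.Quotient.mk 𝕀) (p * X i)
        = (Ideal.Quotient.mk 𝕀) p * (Ideal.Quotient.mk 𝕀) (X i) := map_mul _ _ _
    fin_cases i
    · -- multiply by u
      show ∃ a' b' : Polynomial R, b'.coeff 0 = 0 ∧
        (Ideal.Quotient.mk 𝕀) (p * X 0) = Polynomial.aeval (suspU R f) a'
          + Polynomial.aeval (suspV R f) b'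
      have hmul0 : (Ideal.Quotient.mk 𝕀) (p * X 0)
          = (Ideal.Quotient.mk 𝕀) p * suspU R f := map_mul _ _ _
      rw [hmul0, e]
      have hb : b = Polynomial.X * b.divX := by
        have := Polynomial.X_mul_divX_add b
        rw [hb0, map_zero, add_zero] at this
        exact this.symm
      refine ⟨a * Polynomial.X + Polynomial.C (f * (b.divX).coeff 0),
        Polynomial.C f * b.divX - Polynomial.C (f * (b.divX).coeff 0), by simp, ?_⟩
      have e1 : Polynomial.aeval (suspU R f) (a * Polynomial.X)
          = Polynomial.aeval (suspU R f) a * suspU R f := by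
        rw [map_mul, Polynomial.aeval_X]
      have e2 : (Polynomial.aeval (suspU R f)) (Polynomial.C (f * (b.divX).coeff 0))
          = (Polynomial.aeval (suspV R f)) (Polynomial.C (f * (b.divX).coeff 0)) := by
        rw [Polynomial.aeval_C, Polynomial.aeval_C]
      rw [add_mul, mul_comm (Polynomial.aeval (suspV R f) b) (suspU R f)]
      conv_lhs => rw [hb]
      rw [key, map_add, e1, e2, map_sub]
      ring
    · -- multiply by v
      show ∃ a' b' : Polynomial R, b'.coeff 0 = 0 ∧
        (Ideal.Quotient.mk 𝕀) (p * X 1) = Polynomial.aeval (suspU R f) a'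
          + Polynomial.aeval (suspV R f) b'
      have hmul1 : (Ideal.Quotient.mk 𝕀) (p * X 1)
          = (Ideal.Quotient.mk 𝕀) p * suspV R f := map_mul _ _ _
      rw [hmul1, e]
      have ha : a = Polynomial.C (a.coeff 0) + Polynomial.X * a.divX := by
        linear_combination (Polynomial.X_mul_divX_add a).symm
      refine ⟨Polynomial.C f * a.divX,
        b * Polynomial.X + Polynomial.C (a.coeff 0) * Polynomial.X, by simp, ?_⟩
      rw [add_mul]
      have h1 : Polynomial.aeval (suspU R f) a * suspV R f
          = Polynomial.aeval (suspU R f) (Polynomial.C f * a.divX)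
            + Polynomial.aeval (suspV R f) (Polynomial.C (a.coeff 0) * Polynomial.X) := by
        conv_lhs => rw [ha]
        rw [map_add, map_mul, Polynomial.aeval_X, add_mul, map_mul, map_mul,
          Polynomial.aeval_X, Polynomial.aeval_C, Polynomial.aeval_C, Polynomial.aeval_C]
        rw [mul_assoc, mul_comm (Polynomial.aeval (suspU R f) a.divX) (suspV R f),
          ← mul_assoc, sRel]
        ring
      have h2 : Polynomial.aeval (suspV R f) b * suspV R f
          = Polynomial.aeval (suspV R f) (b * Polynomial.X) := by
        rw [map_mul, Polynomial.aeval_X]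
      rw [h1, h2, map_add]
      ring

variable [IsDomain R]

lemma psi_inj (hf0 : f ≠ 0) : Function.Injective (psi f) := by
  rw [injective_iff_map_eq_zero]
  intro s hs
  obtain ⟨a, b, hb0, rfl⟩ := normal_form f s
  rw [map_add, psi_aeval_u, psi_aeval_v] at hs
  have hcoeff : ∀ k : ℤ, (Polynomial.toLaurent a).coeff k
      + (Polynomial.aeval (LaurentPolynomial.C f * LaurentPolynomial.T (-1)) b :
          LaurentPolynomial R).coeff k = 0 := by
    intro k
    rw [← Finsupp.add_apply, ← AddMonoidAlgebra.coeff_add, hs]; rfl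
  have hbz : b = 0 := by
    ext n
    rcases Nat.eq_zero_or_pos n with hn | hn
    · rw [hn, hb0, Polynomial.coeff_zero]
    · have := hcoeff (-(n:ℤ))
      rw [toLaurent_coeff_neg a _ (by omega), aevalV_coeff_neg, zero_add] at this
      have := mul_eq_zero.mp this
      rcases this with h | h
      · exact absurd h (pow_ne_zero _ hf0)
      · rw [h, Polynomial.coeff_zero]
  have haz : a = 0 := by
    ext n
    have := hcoeff (n : ℤ)
    rcases Nat.eq_zero_or_pos n with hn | hn
    · subst hn
      rw [toLaurent_coeff, show ((0:ℕ):ℤ) = -((0:ℕ):ℤ) by norm_num,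
        aevalV_coeff_neg, hb0, mul_zero, add_zero] at this
      rw [this, Polynomial.coeff_zero]
    · rw [toLaurent_coeff, aevalV_coeff_pos f b _ (by omega), add_zero] at this
      rw [this, Polynomial.coeff_zero]
  rw [hbz, haz, map_zero, map_zero, add_zero]

lemma laurent_domain : IsDomain (LaurentPolynomial R) :=
  NoZeroDivisors.to_isDomain _

lemma sdomain (hf0 : f ≠ 0) : IsDomain (Susp R f) :=
  haveI := laurent_domain (R := R)
  Function.Injective.isDomain (psi f).toRingHom (psi_inj f hf0)

lemma T_one_ne_zero : (LaurentPolynomial.T 1 : LaurentPolynomial R) ≠ 0 := by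
  rw [show (LaurentPolynomial.T 1 : LaurentPolynomial R) = AddMonoidAlgebra.single 1 1 from rfl]
  intro h
  exact one_ne_zero (AddMonoidAlgebra.single_eq_zero.mp h)

lemma u_ne_zero : suspU R f ≠ 0 := by
  intro h
  have h2 : psi f (suspU R f) = 0 := by rw [h, map_zero]
  rw [psi_u] at h2
  exact T_one_ne_zero h2


lemma u_mul_aevalV (w : Polynomial R) :
    suspU R f * Polynomial.aeval (suspV R f) (Polynomial.X * w)
      = Polynomial.aeval (suspV R f) (Polynomial.C f * w) := by
  rw [map_mul, map_mul, Polynomial.aeval_X, Polynomial.aeval_C, ← mul_assoc, sRel]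

/-- The reduction map `S → (R/f)[Y]` killing `u`. -/
def chiAux : MvPolynomial (Fin 2) R →+* Polynomial (R ⧸ Ideal.span {f}) :=
  MvPolynomial.eval₂Hom ((Polynomial.C).comp (Ideal.Quotient.mk (Ideal.span {f})))
    ![0, Polynomial.X]

lemma chiAux_rel : chiAux f ((X 0 * X 1 - C f : MvPolynomial (Fin 2) R)) = 0 := by
  have hf : Ideal.Quotient.mk (Ideal.span {f}) f = 0 :=
    Ideal.Quotient.eq_zero_iff_mem.mpr (Ideal.mem_span_singleton_self f)
  rw [map_sub, map_mul, chiAux, MvPolynomial.eval₂Hom_X', MvPolynomial.eval₂Hom_X',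
    MvPolynomial.eval₂Hom_C, RingHom.comp_apply, hf, map_zero]
  rw [Matrix.cons_val_zero]
  rw [zero_mul, sub_zero]

def chi : Susp R f →+* Polynomial (R ⧸ Ideal.span {f}) :=
  Ideal.Quotient.lift 𝕀 (chiAux f) (by
    intro a ha
    rw [Ideal.mem_span_singleton] at ha
    obtain ⟨c, rfl⟩ := ha
    rw [map_mul, chiAux_rel, zero_mul])

lemma chi_mk (P : MvPolynomial (Fin 2) R) :
    chi f (Ideal.Quotient.mk 𝕀 P) = chiAux f P := rfl

lemma chi_u : chi f (suspU R f) = 0 := by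
  rw [show suspU R f = Ideal.Quotient.mk 𝕀 (X 0) from rfl, chi_mk, chiAux,
    MvPolynomial.eval₂Hom_X']
  rw [Matrix.cons_val_zero]

lemma chi_v : chi f (suspV R f) = Polynomial.X := by
  rw [show suspV R f = Ideal.Quotient.mk 𝕀 (X 1) from rfl, chi_mk, chiAux,
    MvPolynomial.eval₂Hom_X']
  rfl

lemma chi_algebraMap (r : R) :
    chi f (algebraMap R (Susp R f) r)
      = Polynomial.C (Ideal.Quotient.mk (Ideal.span {f}) r) := by
  rw [show algebraMap R (Susp R f) r = Ideal.Quotient.mk 𝕀 (C r) from rfl, chi_mk, chiAux,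
    MvPolynomial.eval₂Hom_C, RingHom.comp_apply]

lemma chi_comp_algebraMap :
    (chi f).comp (algebraMap R (Susp R f))
      = (Polynomial.C).comp (Ideal.Quotient.mk (Ideal.span {f})) :=
  RingHom.ext fun r => chi_algebraMap f r

lemma chi_aeval_u (a : Polynomial R) :
    chi f (Polynomial.aeval (suspU R f) a)
      = Polynomial.C (Ideal.Quotient.mk (Ideal.span {f}) (a.coeff 0)) := by
  rw [Polynomial.aeval_def, Polynomial.hom_eval₂, chi_u, chi_comp_algebraMap,
    Polynomial.eval₂_at_zero, RingHom.comp_apply]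

lemma chi_aeval_v (b : Polynomial R) :
    chi f (Polynomial.aeval (suspV R f) b)
      = b.map (Ideal.Quotient.mk (Ideal.span {f})) := by
  rw [Polynomial.aeval_def, Polynomial.hom_eval₂, chi_v, chi_comp_algebraMap]
  rfl

lemma u_dvd_of {a b : Polynomial R} (ha : f ∣ a.coeff 0) (hb : ∀ j, f ∣ b.coeff j) :
    suspU R f ∣ Polynomial.aeval (suspU R f) a + Polynomial.aeval (suspV R f) b := by
  obtain ⟨a0', ha0'⟩ := ha
  obtain ⟨b'', rfl⟩ := (Polynomial.C_dvd_iff_dvd_coeff f b).mpr hb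
  refine ⟨Polynomial.aeval (suspU R f) a.divX
    + Polynomial.aeval (suspV R f) (Polynomial.X * (Polynomial.C a0' + b'')), ?_⟩
  rw [mul_add, u_mul_aevalV]
  have h1 : suspU R f * Polynomial.aeval (suspU R f) a.divX
      = Polynomial.aeval (suspU R f) (Polynomial.X * a.divX) := by
    rw [map_mul, Polynomial.aeval_X]
  rw [h1]
  have hsplit : Polynomial.aeval (suspU R f) a
      = Polynomial.aeval (suspU R f) (Polynomial.X * a.divX)
        + algebraMap R (Susp R f) (a.coeff 0) := by
    conv_lhs => rw [← Polynomial.X_mul_divX_add a]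
    rw [map_add, Polynomial.aeval_C]
  have hexp : Polynomial.C f * (Polynomial.C a0' + b'')
      = Polynomial.C (f * a0') + Polynomial.C f * b'' := by
    rw [mul_add, ← Polynomial.C_mul]
  rw [hexp, map_add, Polynomial.aeval_C, hsplit, ← ha0']
  ring

lemma mk_f_eq_zero_iff (r : R) :
    Ideal.Quotient.mk (Ideal.span {f}) r = 0 ↔ f ∣ r := by
  rw [Ideal.Quotient.eq_zero_iff_mem, Ideal.mem_span_singleton]

lemma u_prime (hf0 : f ≠ 0) (hfp : Prime f) : Prime (suspU R f) := by
  haveI := sdomain f hf0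
  rw [← Ideal.span_singleton_prime (u_ne_zero f)]
  haveI hsp : (Ideal.span {f}).IsPrime := (Ideal.span_singleton_prime hf0).mpr hfp
  have hker : Ideal.span {suspU R f} = RingHom.ker (chi f) := by
    apply le_antisymm
    · rw [Ideal.span_le, Set.singleton_subset_iff]
      exact RingHom.mem_ker.mpr (chi_u f)
    · intro s hs
      rw [RingHom.mem_ker] at hs
      obtain ⟨a, b, hb0, rfl⟩ := normal_form f s
      rw [map_add, chi_aeval_u, chi_aeval_v] at hs
      have hcoef : ∀ j : ℕ, (Polynomial.C (Ideal.Quotient.mk (Ideal.span {f}) (a.coeff 0))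
          + b.map (Ideal.Quotient.mk (Ideal.span {f}))).coeff j = 0 := by
        rw [hs]; intro j; rw [Polynomial.coeff_zero]
      have ha : f ∣ a.coeff 0 := by
        have := hcoef 0
        rw [Polynomial.coeff_add, Polynomial.coeff_C, if_pos rfl, Polynomial.coeff_map,
          hb0, map_zero, add_zero] at this
        exact (mk_f_eq_zero_iff f _).mp this
      have hbdvd : ∀ j, f ∣ b.coeff j := by
        intro j
        rcases Nat.eq_zero_or_pos j with hj | hj
        · rw [hj, hb0]; exact dvd_zero f
        · have := hcoef j
          rw [Polynomial.coeff_add, Polynomial.coeff_C, if_neg (by omega),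
            Polynomial.coeff_map, zero_add] at this
          exact (mk_f_eq_zero_iff f _).mp this
      exact Ideal.mem_span_singleton.mpr (u_dvd_of f ha hbdvd)
  rw [hker]
  exact RingHom.ker_isPrime _

lemma img_dvd (s : Susp R f) (n : ℕ) : f ^ n ∣ (psi f s).coeff (-(n : ℤ)) := by
  obtain ⟨a, b, hb0, rfl⟩ := normal_form f s
  rw [map_add, psi_aeval_u, psi_aeval_v]
  rcases Nat.eq_zero_or_pos n with hn | hn
  · rw [hn, pow_zero]; exact one_dvd _
  · have : (Polynomial.toLaurent a + Polynomial.aeval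
        (LaurentPolynomial.C f * LaurentPolynomial.T (-1)) b).coeff (-(n:ℤ))
        = f ^ n * b.coeff n := by
      rw [AddMonoidAlgebra.coeff_add, Finsupp.add_apply, toLaurent_coeff_neg a _ (by omega), aevalV_coeff_neg, zero_add]
    rw [this]
    exact Dvd.intro _ rfl

lemma T_mul_apply (N : ℤ) (A : LaurentPolynomial R) (k : ℤ) :
    ((LaurentPolynomial.T N : LaurentPolynomial R) * A).coeff k = A.coeff (k - N) := by
  have h : (LaurentPolynomial.T N : LaurentPolynomial R) = AddMonoidAlgebra.single N 1 := rfl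
  rw [h, AddMonoidAlgebra.coeff_single_mul_apply, one_mul, neg_add_eq_sub]

lemma exists_order [UniqueFactorizationMonoid R] (hf0 : f ≠ 0) (hfp : Prime f)
    {s : Susp R f} (hs : s ≠ 0) :
    ∃ (i : ℕ) (t : Susp R f), s = suspU R f ^ i * t ∧ ¬ suspU R f ∣ t := by
  classical
  have hψ : psi f s ≠ 0 := fun h => hs (psi_inj f hf0 (by rw [h, map_zero]))
  obtain ⟨k, hk⟩ := Finsupp.ne_iff.mp (AddMonoidAlgebra.coeff_eq_zero.not.mpr hψ)
  have hk' : (psi f s).coeff k ≠ 0 := by simpa using hk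
  obtain ⟨M, hM⟩ := FiniteMultiplicity.def.mp (FiniteMultiplicity.of_prime_left hfp hk')
  set N : ℕ := k.toNat + M + 1 with hN
  have hbound : ¬ suspU R f ^ N ∣ s := by
    rintro ⟨t, hts⟩
    have h1 : psi f s = LaurentPolynomial.T (N : ℤ) * psi f t := by
      rw [hts, map_mul, map_pow, psi_u, LaurentPolynomial.T_pow, mul_one]
    have h2 : (psi f s).coeff k = (psi f t).coeff (k - N) := by rw [h1, T_mul_apply]
    have hmk : k - (N : ℤ) = -((((N : ℤ) - k).toNat : ℕ) : ℤ) := by omega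
    have h3 : f ^ (((N : ℤ) - k).toNat) ∣ (psi f s).coeff k := by
      rw [h2, hmk]; exact img_dvd f t _
    exact hM (dvd_trans (pow_dvd_pow f (by omega)) h3)
  let P : ℕ → Prop := fun i => suspU R f ^ i ∣ s
  have hP0 : P 0 := by simp [P]
  have hi : P (Nat.findGreatest P N) := Nat.findGreatest_spec (Nat.zero_le N) hP0
  obtain ⟨t, ht⟩ := hi
  refine ⟨Nat.findGreatest P N, t, ht, ?_⟩
  rintro ⟨w, rfl⟩
  have hi1 : P (Nat.findGreatest P N + 1) := ⟨w, by rw [ht, pow_succ]; ring⟩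
  have hiN : Nat.findGreatest P N ≠ N := by
    intro h
    exact hbound (h ▸ ⟨suspU R f * w, ht⟩)
  have hile : Nat.findGreatest P N ≤ N := Nat.findGreatest_le N
  exact Nat.findGreatest_is_greatest (Nat.lt_succ_self _) (by omega) hi1

lemma laurent_unit {B : LaurentPolynomial R} (h : IsUnit B) :
    ∃ (c : R) (m : ℤ), IsUnit c ∧ B = LaurentPolynomial.C c * LaurentPolynomial.T m := by
  obtain ⟨v, hv⟩ := h
  have hmul : B * (↑v⁻¹ : LaurentPolynomial R) = 1 := by
    rw [← hv]; exact v.mul_inv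
  obtain ⟨n₁, P₁, hP₁⟩ := LaurentPolynomial.exists_T_pow B
  obtain ⟨n₂, P₂, hP₂⟩ := LaurentPolynomial.exists_T_pow (↑v⁻¹ : LaurentPolynomial R)
  have hXX : P₁ * P₂ = Polynomial.X ^ (n₁ + n₂) := by
    apply Polynomial.toLaurent_injective
    rw [map_mul, hP₁, hP₂, Polynomial.toLaurent_X_pow,
      show B * LaurentPolynomial.T (n₁:ℤ) * ((↑v⁻¹ : LaurentPolynomial R)
          * LaurentPolynomial.T (n₂:ℤ))
        = B * (↑v⁻¹ : LaurentPolynomial R)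
          * (LaurentPolynomial.T (n₁:ℤ) * LaurentPolynomial.T (n₂:ℤ)) by ring,
      hmul, one_mul, ← LaurentPolynomial.T_add]
    push_cast
    rfl
  have hdvd : P₁ ∣ Polynomial.X ^ (n₁ + n₂) := ⟨P₂, hXX.symm⟩
  obtain ⟨i, _, hassoc⟩ := (dvd_prime_pow Polynomial.prime_X _).mp hdvd
  obtain ⟨w, hw⟩ := hassoc
  obtain ⟨c, hc, hCc⟩ := Polynomial.isUnit_iff.mp ((Units.isUnit w⁻¹))
  have hP1 : P₁ = Polynomial.X ^ i * Polynomial.C c := by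
    rw [hCc]
    have := congrArg (fun q => q * (↑w⁻¹ : Polynomial R)) hw
    rw [mul_assoc] at this
    rw [← this, Units.mul_inv, mul_one]
  refine ⟨c, (i : ℤ) - n₁, hc, ?_⟩
  have hB : B = Polynomial.toLaurent P₁ * LaurentPolynomial.T (-(n₁:ℤ)) := by
    rw [hP₁, mul_assoc, ← LaurentPolynomial.T_add]
    rw [show (n₁:ℤ) + -(n₁:ℤ) = 0 by ring, LaurentPolynomial.T_zero, mul_one]
  rw [hB, hP1, map_mul, Polynomial.toLaurent_X_pow, Polynomial.toLaurent_C,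
    LaurentPolynomial.T_sub]
  ring

lemma CT_apply (c : R) (m k : ℤ) :
    (LaurentPolynomial.C c * LaurentPolynomial.T m : LaurentPolynomial R).coeff k
      = if m = k then c else 0 := by
  rw [← LaurentPolynomial.single_eq_C_mul_T]
  exact Finsupp.single_apply

lemma unit_step (hf0 : f ≠ 0) (P : Polynomial R) (i : ℕ) (p₀ : Susp R f)
    (hP : Polynomial.aeval (suspU R f) P = suspU R f ^ i * p₀)
    (hp₀ : IsUnit p₀) (h0 : P.coeff 0 ≠ 0) : IsUnit P := by
  have h1 : Polynomial.toLaurent P = LaurentPolynomial.T (i : ℤ) * psi f p₀ := by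
    rw [← psi_aeval_u, hP, map_mul, map_pow, psi_u, LaurentPolynomial.T_pow, mul_one]
  obtain ⟨c, m, hc, hB⟩ := laurent_unit (hp₀.map (psi f))
  rw [hB] at h1
  have h2 : Polynomial.toLaurent P
      = LaurentPolynomial.C c * LaurentPolynomial.T ((i : ℤ) + m) := by
    rw [h1, LaurentPolynomial.T_add]; ring
  have hm : (i : ℤ) + m = 0 := by
    by_contra hne
    apply h0
    have h3 := congrArg (fun q : LaurentPolynomial R => q.coeff (0 : ℤ)) h2
    rw [CT_apply, if_neg hne] at h3
    rw [← toLaurent_coeff P 0]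
    exact_mod_cast h3
  have h4 : Polynomial.toLaurent P = Polynomial.toLaurent (Polynomial.C c) := by
    rw [h2, hm, LaurentPolynomial.T_zero, mul_one, Polynomial.toLaurent_C]
  rw [Polynomial.toLaurent_injective h4]
  exact Polynomial.isUnit_C.mpr hc

end

end SuspAux

/-- Let `R` be a UFD, `f ∈ R` a nonzero non-unit prime, and `S = R[u,v]/(uv - f)`.
If `g ∈ S` is irreducible, not divisible by `u`, and `l` is the smallest
non-negative integer with `u^l g` in the subring `R[u] ⊆ S`, then `u^l g` is a
prime element of `R[u]`. -/
theorem pow_mul_prime_in_polynomial_subring (R : Type*) [CommRing R] [IsDomain R]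
    [UniqueFactorizationMonoid R] (f : R) (hf0 : f ≠ 0) (hfu : ¬ IsUnit f)
    (hfp : Prime f) (g : Susp R f) (hg : Irreducible g)
    (hug : ¬ suspU R f ∣ g) (l : ℕ)
    (hl : (suspU R f) ^ l * g ∈ Algebra.adjoin R {suspU R f})
    (hmin : ∀ k < l, (suspU R f) ^ k * g ∉ Algebra.adjoin R {suspU R f}) :
    Prime (⟨(suspU R f) ^ l * g, hl⟩ : Algebra.adjoin R {suspU R f}) := by
  classical
  haveI hdom : IsDomain (Susp R f) := SuspAux.sdomain f hf0
  have hinj : Function.Injective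
      (Polynomial.aeval (suspU R f) : Polynomial R →ₐ[R] Susp R f) := by
    intro p q h
    apply Polynomial.toLaurent_injective
    rw [← SuspAux.psi_aeval_u f p, ← SuspAux.psi_aeval_u f q, h]
  have hrange : Algebra.adjoin R {suspU R f}
      = (Polynomial.aeval (suspU R f) : Polynomial R →ₐ[R] Susp R f).range :=
    Algebra.adjoin_singleton_eq_range_aeval R _
  have hlmem := hl
  rw [hrange] at hlmem
  obtain ⟨H, hH'⟩ := hlmem
  have hH : Polynomial.aeval (suspU R f) H = suspU R f ^ l * g := hH'
  clear hH'
  have hu0 : suspU R f ≠ 0 := SuspAux.u_ne_zero f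
  have hup : Prime (suspU R f) := SuspAux.u_prime f hf0 hfp
  have hH0 : H.coeff 0 ≠ 0 := by
    intro h0
    obtain ⟨H', rfl⟩ := Polynomial.X_dvd_iff.mpr h0
    rw [map_mul, Polynomial.aeval_X] at hH
    cases l with
    | zero =>
      apply hug
      rw [pow_zero, one_mul] at hH
      exact ⟨_, hH.symm⟩
    | succ k =>
      apply hmin k (Nat.lt_succ_self k)
      have hcanc : suspU R f * (suspU R f ^ k * g)
          = suspU R f * Polynomial.aeval (suspU R f) H' := by
        rw [hH]; ring
      have h2 := mul_left_cancel₀ hu0 hcanc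
      rw [hrange, h2]
      exact ⟨H', rfl⟩
  have hH0' : H ≠ 0 := fun h => hH0 (by rw [h, Polynomial.coeff_zero])
  have hHirr : Irreducible H := by
    constructor
    · intro hunit
      have : IsUnit (suspU R f ^ l * g) := hH ▸ hunit.map (Polynomial.aeval (suspU R f))
      exact hg.not_isUnit (isUnit_of_mul_isUnit_right this)
    · intro P Q hPQ
      have hP0 : P.coeff 0 ≠ 0 := fun h =>
        hH0 (by rw [hPQ, Polynomial.mul_coeff_zero, h, zero_mul])
      have hQ0 : Q.coeff 0 ≠ 0 := fun h =>
        hH0 (by rw [hPQ, Polynomial.mul_coeff_zero, h, mul_zero])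
      have hPne : Polynomial.aeval (suspU R f) P ≠ 0 := by
        intro h
        have hz : P = 0 := hinj (by rw [h, map_zero])
        exact hP0 (by rw [hz, Polynomial.coeff_zero])
      have hQne : Polynomial.aeval (suspU R f) Q ≠ 0 := by
        intro h
        have hz : Q = 0 := hinj (by rw [h, map_zero])
        exact hQ0 (by rw [hz, Polynomial.coeff_zero])
      obtain ⟨i, p₀, hip, hpu⟩ := SuspAux.exists_order f hf0 hfp hPne
      obtain ⟨j, q₀, hjq, hqu⟩ := SuspAux.exists_order f hf0 hfp hQne
      have hprod : suspU R f ^ l * g = suspU R f ^ (i + j) * (p₀ * q₀) := by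
        rw [← hH, hPQ, map_mul, hip, hjq, pow_add]; ring
      have hnd : ¬ suspU R f ∣ p₀ * q₀ := by
        intro hd
        rcases hup.dvd_or_dvd hd with h | h
        exacts [hpu h, hqu h]
      have hij : g = p₀ * q₀ := by
        rcases lt_trichotomy (i + j) l with hlt | heq | hgt
        · exfalso
          apply hnd
          have heq2 : (i + j) + (l - (i + j)) = l := by omega
          have hstep : suspU R f ^ (i + j) * (p₀ * q₀)
              = suspU R f ^ (i + j) * (suspU R f ^ (l - (i + j)) * g) := by
            conv_rhs => rw [← mul_assoc, ← pow_add, heq2]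
            exact hprod.symm
          have h2 := mul_left_cancel₀ (pow_ne_zero _ hu0) hstep
          obtain ⟨m, hm⟩ : ∃ m, l - (i + j) = m + 1 := ⟨l - (i + j) - 1, by omega⟩
          exact ⟨suspU R f ^ m * g, by rw [h2, hm, pow_succ]; ring⟩
        · have hstep : suspU R f ^ l * g = suspU R f ^ l * (p₀ * q₀) := by
            rw [hprod, heq]
          exact mul_left_cancel₀ (pow_ne_zero _ hu0) hstep
        · exfalso
          apply hug
          have heq2 : l + ((i + j) - l) = i + j := by omega
          have hstep : suspU R f ^ l * (suspU R f ^ ((i + j) - l) * (p₀ * q₀))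
              = suspU R f ^ l * g := by
            rw [← mul_assoc, ← pow_add, heq2, ← hprod]
          have h2 := mul_left_cancel₀ (pow_ne_zero _ hu0) hstep
          obtain ⟨m, hm⟩ : ∃ m, (i + j) - l = m + 1 := ⟨(i + j) - l - 1, by omega⟩
          exact ⟨suspU R f ^ m * (p₀ * q₀), by rw [← h2, hm, pow_succ]; ring⟩
      rcases hg.isUnit_or_isUnit hij with hPu | hQu
      · exact Or.inl (SuspAux.unit_step f hf0 P i p₀ hip hPu hP0)
      · exact Or.inr (SuspAux.unit_step f hf0 Q j q₀ hjq hQu hQ0)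
  have hHprime : Prime H := UniqueFactorizationMonoid.irreducible_iff_prime.mp hHirr
  let e : Polynomial R ≃ₐ[R] (Algebra.adjoin R {suspU R f}) :=
    (AlgEquiv.ofInjective _ hinj).trans (Subalgebra.equivOfEq _ _ hrange.symm)
  have hval : (⟨(suspU R f) ^ l * g, hl⟩ : Algebra.adjoin R {suspU R f}) = e H := by
    apply Subtype.ext
    show (suspU R f) ^ l * g = ((e H : Algebra.adjoin R {suspU R f}) : Susp R f)
    rw [← hH]
    rfl
  rw [hval]
  exact (MulEquiv.prime_iff e.toRingEquiv.toMulEquiv).mpr hHprime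
end

section
/- Let R be a domain, f ∈ R nonzero, and S = R[u,v]/(uv - f). Then S decomposes as a Z-graded ring with S_0 = R, S_i = R·u^i for i > 0, and S_{-i} = R·v^i for i > 0; in particular the natural map R → S is injective and each graded component is a free R-module of rank 1. -/
open MvPolynomial
set_option synthInstance.maxHeartbeats 400000
set_option maxHeartbeats 1000000

/-- The degree-`i` component of `S = R[u,v]/(uv - f)`: `R·u^i` for `i ≥ 0` and
`R·v^{-i}` for `i < 0`. -/
noncomputable def suspComponent (R : Type*) [CommRing R] (f : R) (i : ℤ) :
    Submodule R (Susp R f) :=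
  if 0 ≤ i then Submodule.span R {(suspU R f) ^ i.toNat}
  else Submodule.span R {(suspV R f) ^ (-i).toNat}

section Aux

variable {R : Type*} [CommRing R] (f : R)

/-- The generator of the `i`-th component. -/
noncomputable def suspGen (i : ℤ) : Susp R f :=
  if 0 ≤ i then suspU R f ^ i.toNat else suspV R f ^ (-i).toNat

lemma suspComponent_eq (i : ℤ) :
    suspComponent R f i = Submodule.span R {suspGen f i} := by
  unfold suspComponent suspGen; split <;> rfl

lemma suspGen_of_nonneg {i : ℤ} (hi : 0 ≤ i) : suspGen f i = suspU R f ^ i.toNat :=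
  if_pos hi

lemma suspGen_of_neg {i : ℤ} (hi : i < 0) : suspGen f i = suspV R f ^ (-i).toNat :=
  if_neg (not_le.mpr hi)

lemma susp_mk_C (a : R) :
    Ideal.Quotient.mk (Ideal.span {(X 0 * X 1 - C f : MvPolynomial (Fin 2) R)}) (C a)
      = algebraMap R (Susp R f) a := by
  rfl

lemma susp_uv : suspU R f * suspV R f = algebraMap R (Susp R f) f := by
  have h : Ideal.Quotient.mk (Ideal.span {(X 0 * X 1 - C f : MvPolynomial (Fin 2) R)})
      (X 0 * X 1) = Ideal.Quotient.mk _ (C f) := by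
    rw [Ideal.Quotient.eq]
    exact Ideal.subset_span rfl
  rw [RingHom.map_mul] at h
  rw [show suspU R f * suspV R f = _ from h, susp_mk_C]

lemma susp_u_mul_v_pow (a b : ℕ) :
    suspU R f ^ (a + b) * suspV R f ^ b = f ^ b • suspU R f ^ a := by
  induction b with
  | zero => simp
  | succ b ih =>
    have h : suspU R f ^ (a + (b + 1)) * suspV R f ^ (b + 1)
        = (suspU R f * suspV R f) * (suspU R f ^ (a + b) * suspV R f ^ b) := by ring
    rw [h, ih, susp_uv, ← Algebra.smul_def, smul_smul, ← pow_succ']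

lemma susp_v_mul_u_pow (a b : ℕ) :
    suspU R f ^ b * suspV R f ^ (a + b) = f ^ b • suspV R f ^ a := by
  induction b with
  | zero => simp
  | succ b ih =>
    have h : suspU R f ^ (b + 1) * suspV R f ^ (a + (b + 1))
        = (suspU R f * suspV R f) * (suspU R f ^ b * suspV R f ^ (a + b)) := by ring
    rw [h, ih, susp_uv, ← Algebra.smul_def, smul_smul, ← pow_succ']

lemma suspGen_mul_mem (i j : ℤ) :
    suspGen f i * suspGen f j ∈ suspComponent R f (i + j) := by
  rw [suspComponent_eq]
  rcases le_or_gt 0 i with hi | hi <;> rcases le_or_gt 0 j with hj | hj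
  · rw [suspGen_of_nonneg f hi, suspGen_of_nonneg f hj, suspGen_of_nonneg f (by omega),
      ← pow_add, show i.toNat + j.toNat = (i + j).toNat by omega]
    exact Submodule.mem_span_singleton_self _
  · rw [suspGen_of_nonneg f hi, suspGen_of_neg f hj]
    rcases le_or_gt 0 (i + j) with hij | hij
    · rw [suspGen_of_nonneg f hij, show i.toNat = (i + j).toNat + (-j).toNat by omega,
        susp_u_mul_v_pow]
      exact Submodule.smul_mem _ _ (Submodule.mem_span_singleton_self _)
    · rw [suspGen_of_neg f hij, show (-j).toNat = (-(i + j)).toNat + i.toNat by omega,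
        susp_v_mul_u_pow]
      exact Submodule.smul_mem _ _ (Submodule.mem_span_singleton_self _)
  · rw [suspGen_of_neg f hi, suspGen_of_nonneg f hj,
      mul_comm (suspV R f ^ (-i).toNat) (suspU R f ^ j.toNat)]
    rcases le_or_gt 0 (i + j) with hij | hij
    · rw [suspGen_of_nonneg f hij, show j.toNat = (i + j).toNat + (-i).toNat by omega,
        susp_u_mul_v_pow]
      exact Submodule.smul_mem _ _ (Submodule.mem_span_singleton_self _)
    · rw [suspGen_of_neg f hij, show (-i).toNat = (-(i + j)).toNat + j.toNat by omega,
        susp_v_mul_u_pow]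
      exact Submodule.smul_mem _ _ (Submodule.mem_span_singleton_self _)
  · rw [suspGen_of_neg f hi, suspGen_of_neg f hj, suspGen_of_neg f (by omega), ← pow_add,
      show (-i).toNat + (-j).toNat = (-(i + j)).toNat by omega]
    exact Submodule.mem_span_singleton_self _

lemma susp_mul_mem {i j : ℤ} {x y : Susp R f} (hx : x ∈ suspComponent R f i)
    (hy : y ∈ suspComponent R f j) : x * y ∈ suspComponent R f (i + j) := by
  rw [suspComponent_eq] at hx hy
  obtain ⟨r, rfl⟩ := Submodule.mem_span_singleton.mp hx
  obtain ⟨s, rfl⟩ := Submodule.mem_span_singleton.mp hy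
  rw [show (r • suspGen f i) * (s • suspGen f j)
      = (r * s) • (suspGen f i * suspGen f j) by
    rw [smul_mul_assoc, mul_smul_comm, smul_smul]]
  exact Submodule.smul_mem _ _ (suspGen_mul_mem f i j)

lemma suspGen_zero : suspGen f 0 = 1 := by simp [suspGen]

lemma susp_gradedMonoid : SetLike.GradedMonoid (suspComponent R f) where
  one_mem := by
    rw [suspComponent_eq, ← suspGen_zero f]
    exact Submodule.mem_span_singleton_self _
  mul_mem _ _ _ _ hx hy := susp_mul_mem f hx hy

lemma susp_iSup_eq_top : (⨆ i, suspComponent R f i) = ⊤ := by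
  rw [eq_top_iff]
  rintro x -
  obtain ⟨p, rfl⟩ := Ideal.Quotient.mk_surjective x
  induction p using MvPolynomial.induction_on with
  | C a =>
    refine Submodule.mem_iSup_of_mem 0 ?_
    rw [suspComponent_eq, susp_mk_C, Algebra.algebraMap_eq_smul_one, ← suspGen_zero f]
    exact Submodule.smul_mem _ _ (Submodule.mem_span_singleton_self _)
  | add p q hp hq => rw [map_add]; exact add_mem hp hq
  | mul_X p s hp =>
    rw [map_mul]
    have hX : ∃ d : ℤ, Ideal.Quotient.mk
        (Ideal.span {(X 0 * X 1 - C f : MvPolynomial (Fin 2) R)}) (X s)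
        ∈ suspComponent R f d := by
      fin_cases s
      · refine ⟨1, ?_⟩
        rw [suspComponent_eq]
        have : suspGen f 1 = suspU R f := by simp [suspGen]
        rw [this]
        exact Submodule.mem_span_singleton_self _
      · refine ⟨-1, ?_⟩
        rw [suspComponent_eq]
        have : suspGen f (-1) = suspV R f := by simp [suspGen]
        rw [this]
        exact Submodule.mem_span_singleton_self _
    obtain ⟨d, hd⟩ := hX
    refine Submodule.iSup_induction (motive := fun y =>
      y * Ideal.Quotient.mk _ (X s) ∈ ⨆ i, suspComponent R f i) _ hp ?_ (by simp) ?_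
    · intro i y hy
      exact Submodule.mem_iSup_of_mem (i + d) (susp_mul_mem f hy hd)
    · intro a b ha hb
      rw [add_mul]; exact add_mem ha hb

/-- The algebra map `S → R[t,t⁻¹]`, `u ↦ t`, `v ↦ f·t⁻¹`. -/
noncomputable def suspPhi : Susp R f →ₐ[R] AddMonoidAlgebra R ℤ :=
  Ideal.Quotient.liftₐ _
    (aeval fun s : Fin 2 => if s = 0 then AddMonoidAlgebra.single (1 : ℤ) (1 : R)
      else AddMonoidAlgebra.single (-1 : ℤ) f)
    (by
      intro a ha
      rw [Ideal.mem_span_singleton] at ha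
      obtain ⟨c, rfl⟩ := ha
      rw [map_mul]
      have h0 : (aeval fun s : Fin 2 => if s = 0 then AddMonoidAlgebra.single (1 : ℤ) (1 : R)
          else AddMonoidAlgebra.single (-1 : ℤ) f) (X 0 * X 1 - C f) = 0 := by
        rw [map_sub, map_mul, aeval_X, aeval_X, aeval_C]
        simp [AddMonoidAlgebra.single_mul_single, AddMonoidAlgebra.coe_algebraMap]
      rw [h0, zero_mul])

lemma suspPhi_u : suspPhi f (suspU R f) = AddMonoidAlgebra.single (1 : ℤ) (1 : R) := by
  rw [suspPhi, Ideal.Quotient.liftₐ_apply]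
  exact (Ideal.Quotient.lift_mk _ _ _).trans (by simp)

lemma suspPhi_v : suspPhi f (suspV R f) = AddMonoidAlgebra.single (-1 : ℤ) f := by
  rw [suspPhi, Ideal.Quotient.liftₐ_apply]
  exact (Ideal.Quotient.lift_mk _ _ _).trans (by simp)

lemma suspPhi_gen (i : ℤ) :
    suspPhi f (suspGen f i)
      = AddMonoidAlgebra.single i (f ^ (if 0 ≤ i then 0 else (-i).toNat)) := by
  rcases le_or_gt 0 i with hi | hi
  · rw [suspGen_of_nonneg f hi, if_pos hi, map_pow, suspPhi_u,
      AddMonoidAlgebra.single_pow, one_pow, pow_zero]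
    congr 1
    simp only [nsmul_eq_mul, mul_one]
    omega
  · rw [suspGen_of_neg f hi, if_neg (not_le.mpr hi), map_pow, suspPhi_v,
      AddMonoidAlgebra.single_pow]
    congr 1
    simp only [nsmul_eq_mul, smul_eq_mul]
    omega

variable [IsDomain R]

lemma susp_smul_gen_eq_zero (hf0 : f ≠ 0) (i : ℤ) {r : R}
    (h : suspPhi f (r • suspGen f i) = 0) : r = 0 := by
  have h2 := h
  rw [map_smul, suspPhi_gen] at h2
  have h3 : AddMonoidAlgebra.single i (r * f ^ (if 0 ≤ i then 0 else (-i).toNat)) = 0 := by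
    rw [← h2, AddMonoidAlgebra.smul_single, smul_eq_mul]
  have h4 := AddMonoidAlgebra.single_eq_zero.mp h3
  exact (mul_eq_zero.mp h4).resolve_right (pow_ne_zero _ hf0)

lemma susp_indep (hf0 : f ≠ 0) : iSupIndep (suspComponent R f) := by
  have hq : iSupIndep (AddMonoidAlgebra.grade R : ℤ → Submodule R (AddMonoidAlgebra R ℤ)) :=
    (AddMonoidAlgebra.grade.isInternal :
      DirectSum.IsInternal (AddMonoidAlgebra.grade R : ℤ → _)).submodule_iSupIndep
  have hpq : ∀ i : ℤ, (suspComponent R f i).map (suspPhi f).toLinearMap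
      ≤ AddMonoidAlgebra.grade R i := by
    intro i
    rw [suspComponent_eq, Submodule.map_span, Set.image_singleton, Submodule.span_le,
      Set.singleton_subset_iff]
    show suspPhi f (suspGen f i) ∈ _
    rw [suspPhi_gen]
    exact AddMonoidAlgebra.single_mem_grade _ _
  rw [iSupIndep_def]
  intro i
  rw [Submodule.disjoint_def]
  intro x hx hx'
  have h1 : suspPhi f x ∈ AddMonoidAlgebra.grade R i := hpq i ⟨x, hx, rfl⟩
  have h2 : suspPhi f x ∈ ⨆ (j) (_ : j ≠ i), AddMonoidAlgebra.grade R j := by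
    have hle : Submodule.map (suspPhi f).toLinearMap (⨆ (j) (_ : j ≠ i), suspComponent R f j)
        ≤ ⨆ (j) (_ : j ≠ i), AddMonoidAlgebra.grade R j := by
      rw [Submodule.map_iSup]
      exact iSup_mono fun j => by rw [Submodule.map_iSup]; exact iSup_mono fun hj => hpq j
    exact hle ⟨x, hx', rfl⟩
  have h0 : suspPhi f x = 0 := by
    have := iSupIndep_def.mp hq i
    exact Submodule.disjoint_def.mp this _ h1 h2
  rw [suspComponent_eq] at hx
  obtain ⟨r, rfl⟩ := Submodule.mem_span_singleton.mp hx
  rw [susp_smul_gen_eq_zero f hf0 i h0, zero_smul]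

end Aux

/-- `S = R[u,v]/(uv - f)` is `ℤ`-graded with `S₀ = R`, `S_i = R·u^i` and
`S_{-i} = R·v^i` for `i > 0`: the components form an internal direct sum
compatible with multiplication, the natural map `R → S` is injective, and each
component is a free `R`-module of rank one. -/
theorem suspension_grading (R : Type*) [CommRing R] [IsDomain R] (f : R)
    (hf0 : f ≠ 0) :
    Function.Injective (algebraMap R (Susp R f)) ∧
    DirectSum.IsInternal (suspComponent R f) ∧
    SetLike.GradedMonoid (suspComponent R f) ∧
    ∀ i : ℤ, Nonempty (suspComponent R f i ≃ₗ[R] R) := by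
  have key : ∀ (i : ℤ) (r : R), r • suspGen f i = 0 → r = 0 := by
    intro i r h
    exact susp_smul_gen_eq_zero f hf0 i (by rw [h, map_zero])
  refine ⟨?_, ?_, susp_gradedMonoid f, ?_⟩
  · intro a b hab
    have h0 : (a - b) • suspGen f 0 = 0 := by
      rw [suspGen_zero, sub_smul, ← Algebra.algebraMap_eq_smul_one,
        ← Algebra.algebraMap_eq_smul_one, hab, sub_self]
    exact sub_eq_zero.mp (key 0 _ h0)
  · exact (DirectSum.isInternal_submodule_iff_iSupIndep_and_iSup_eq_top _).mpr
      ⟨susp_indep f hf0, susp_iSup_eq_top f⟩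
  · intro i
    have hmem : ∀ r : R, r • suspGen f i ∈ suspComponent R f i := by
      intro r
      rw [suspComponent_eq]
      exact Submodule.smul_mem _ _ (Submodule.mem_span_singleton_self _)
    refine ⟨(LinearEquiv.ofBijective
      ((LinearMap.toSpanSingleton R (Susp R f) (suspGen f i)).codRestrict
        (suspComponent R f i) hmem) ⟨?_, ?_⟩).symm⟩
    · intro a b hab
      have h1 : a • suspGen f i = b • suspGen f i := congrArg Subtype.val hab
      have h2 : (a - b) • suspGen f i = 0 := by rw [sub_smul, h1, sub_self]
      exact sub_eq_zero.mp (key i _ h2)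
    · rintro ⟨x, hx⟩
      rw [suspComponent_eq] at hx
      obtain ⟨r, hr⟩ := Submodule.mem_span_singleton.mp hx
      exact ⟨r, Subtype.ext hr⟩
end
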